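/- If the semi-parallelogram law d²(M,C) ≥ (d²(A,C)+d²(B,C))/2 − d²(A,B)/4 holds for all geodesic triangles in a convex ball (M the midpoint of A,B), then for any points A, B, C in the ball, d(A♯B, A♯C) ≥ (1/2) d(B,C). -/
import Mathlib


/-- If the semi-parallelogram law holds in a convex ball `B` of a metric space (with `m X Y`
denoting the midpoint of the unique minimizing geodesic from `X` to `Y`), then for all
`A, B, C` in the ball, `d(A♯B, A♯C) ≥ (1/2) d(B,C)`. -/
theorem dist_midpoints_ge_half {M : Type*} [MetricSpace M] (B : Set M)
    (m : M → M → M)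
    (hmem : ∀ X ∈ B, ∀ Y ∈ B, m X Y ∈ B)
    (hmid₁ : ∀ X ∈ B, ∀ Y ∈ B, dist X (m X Y) = dist X Y / 2)
    (hmid₂ : ∀ X ∈ B, ∀ Y ∈ B, dist Y (m X Y) = dist X Y / 2)
    (hspl : ∀ X ∈ B, ∀ Y ∈ B, ∀ Z ∈ B, dist (m X Y) Z ^ 2 ≥
      (dist X Z ^ 2 + dist Y Z ^ 2) / 2 - dist X Y ^ 2 / 4)
    (A B' C : M) (hA : A ∈ B) (hB : B' ∈ B) (hC : C ∈ B) :
    dist (m A B') (m A C) ≥ dist B' C / 2 := by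
  set M1 := m A B'
  set M2 := m A C
  have hM2 : M2 ∈ B := hmem A hA C hC
  have h1 := hspl A hA B' hB M2 hM2
  have h2 := hspl A hA C hC B' hB
  have hAM2 : dist A M2 = dist A C / 2 := hmid₁ A hA C hC
  have hsym : dist B' M2 = dist M2 B' := dist_comm _ _
  have key : dist M1 M2 ^ 2 ≥ (dist B' C / 2) ^ 2 := by
    have h2' : dist M2 B' ^ 2 ≥ (dist A B' ^ 2 + dist C B' ^ 2) / 2 - dist A C ^ 2 / 4 := h2
    have h1' : dist M1 M2 ^ 2 ≥ (dist A M2 ^ 2 + dist B' M2 ^ 2) / 2 - dist A B' ^ 2 / 4 := h1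
    rw [hAM2, hsym] at h1'
    have hc : dist C B' = dist B' C := dist_comm _ _
    rw [hc] at h2'
    nlinarith [h1', h2']
  have h0 : (0:ℝ) ≤ dist B' C / 2 := by positivity
  nlinarith [dist_nonneg (x := M1) (y := M2)]
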